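/- Let s_j = (1/j!)·Σ_{k=0}^{n-j} (-1)^k/k! be the probability that a uniformly random permutation of {1,...,n} has exactly j fixed points. Then for every j with 1 ≤ j ≤ n and j ≠ n-1: (i) Σ_{i=j}^n s_i ≤ 3·s_j, and (ii) Σ_{i=j}^n i·s_i ≤ 3·j·s_j. -/

import Mathlib

open Finset

noncomputable def T (m : ℕ) : ℝ := ∑ k ∈ range (m+1), (-1:ℝ)^k / (Nat.factorial k : ℝ)

lemma T_succ (m : ℕ) : T (m+1) = T m + (-1:ℝ)^(m+1) / (Nat.factorial (m+1) : ℝ) := by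
  simp [T, Finset.sum_range_succ]

lemma T0 : T 0 = 1 := by simp [T]
lemma T1 : T 1 = 0 := by norm_num [T, Finset.sum_range_succ, Nat.factorial]
lemma T2 : T 2 = 1/2 := by norm_num [T, Finset.sum_range_succ, Nat.factorial]
lemma T3 : T 3 = 1/3 := by norm_num [T, Finset.sum_range_succ, Nat.factorial]
lemma T4 : T 4 = 3/8 := by norm_num [T, Finset.sum_range_succ, Nat.factorial]

lemma fact_pos_real (m : ℕ) : (0:ℝ) < (Nat.factorial m : ℝ) := by
  exact_mod_cast Nat.factorial_pos m

lemma fact_le_real {a b : ℕ} (h : a ≤ b) :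
    (1:ℝ) / (Nat.factorial b : ℝ) ≤ 1 / (Nat.factorial a : ℝ) := by
  apply one_div_le_one_div_of_le (fact_pos_real a)
  exact_mod_cast Nat.factorial_le h

lemma T_inv : ∀ m, 4 ≤ m →
    (Even m → 11/30 + 1/(Nat.factorial (m+1) : ℝ) ≤ T m ∧ T m ≤ 3/8) ∧
    (¬ Even m → 11/30 ≤ T m ∧ T m ≤ 3/8 - 1/(Nat.factorial (m+1) : ℝ)) := by
  intro m hm
  induction m, hm using Nat.le_induction with
  | base =>
    constructor
    · intro _
      rw [T4]
      norm_num [Nat.factorial]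
    · intro h
      exact absurd (by decide) h
  | succ m hm ih =>
    have hstep := T_succ m
    have h1 : (0:ℝ) < (Nat.factorial (m+1) : ℝ) := fact_pos_real _
    have h2 : (1:ℝ)/(Nat.factorial (m+2):ℝ) ≤ 1/(Nat.factorial (m+1):ℝ) :=
      fact_le_real (by omega)
    have hmm : (m+1) + 1 = m + 2 := by omega
    by_cases he : Even m
    · have hodd : ¬ Even (m+1) := by simp [Nat.even_add_one, he]
      have hpow : (-1:ℝ)^(m+1) = -1 := (he.add_one).neg_one_pow
      obtain ⟨hl, hu⟩ := ih.1 he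
      rw [hpow, neg_div] at hstep
      refine ⟨fun hcon => absurd hcon hodd, fun _ => ⟨by rw [hstep]; linarith, ?_⟩⟩
      rw [hstep, hmm]
      linarith
    · have heven : Even (m+1) := Nat.even_add_one.mpr he
      have hpow : (-1:ℝ)^(m+1) = 1 := heven.neg_one_pow
      obtain ⟨hl, hu⟩ := ih.2 he
      rw [hpow] at hstep
      refine ⟨fun _ => ⟨?_, by rw [hstep]; linarith⟩, fun hcon => absurd heven hcon⟩
      rw [hstep, hmm]
      linarith

lemma T_ge4 {m : ℕ} (hm : 4 ≤ m) : 11/30 ≤ T m := by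
  obtain ⟨h1, h2⟩ := T_inv m hm
  by_cases he : Even m
  · have := (h1 he).1
    have hp : (0:ℝ) < 1/(Nat.factorial (m+1):ℝ) := by positivity
    linarith
  · exact (h2 he).1

lemma T_le3 {m : ℕ} (hm : 3 ≤ m) : T m ≤ 3/8 := by
  rcases eq_or_lt_of_le hm with h | h
  · rw [← h, T3]; norm_num
  · obtain ⟨h1, h2⟩ := T_inv m h
    by_cases he : Even m
    · exact (h1 he).2
    · have := (h2 he).2
      have hp : (0:ℝ) < 1/(Nat.factorial (m+1):ℝ) := by positivity
      linarith

lemma T_ge2 {m : ℕ} (hm : 2 ≤ m) : 1/3 ≤ T m := by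
  match m, hm with
  | 2, _ => rw [T2]; norm_num
  | 3, _ => rw [T3]
  | (k+4), _ =>
    have := T_ge4 (m := k+4) (by omega)
    linarith

lemma T_le2 {m : ℕ} (hm : 2 ≤ m) : T m ≤ 1/2 := by
  match m, hm with
  | 2, _ => rw [T2]
  | (k+3), _ =>
    have := T_le3 (m := k+3) (by omega)
    linarith

lemma T_nonneg (m : ℕ) : 0 ≤ T m := by
  match m with
  | 0 => rw [T0]; norm_num
  | 1 => rw [T1]
  | (k+2) =>
    have := T_ge2 (m := k+2) (by omega)
    linarith

lemma geom_bound (r : ℝ) (h0 : 0 ≤ r) (h1 : r < 1) (D : ℕ) :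
    ∑ d ∈ range D, r^d ≤ 1/(1-r) := by
  have hr : r ≠ 1 := ne_of_lt h1
  rw [geom_sum_eq hr]
  have h2 : (0:ℝ) < 1 - r := by linarith
  have h3 : (r^D - 1)/(r-1) = (1 - r^D)/(1-r) := by
    rw [← neg_div_neg_eq]
    ring_nf
  rw [h3]
  have h4 : (0:ℝ) ≤ r^D := pow_nonneg h0 D
  gcongr
  linarith

lemma SB (m : ℕ) (hm : 1 ≤ m) (D : ℕ) :
    ∑ d ∈ range D, (1:ℝ)/(Nat.factorial (m+d) : ℝ)
      ≤ (1/(Nat.factorial m : ℝ)) * (((m:ℝ)+1)/m) := by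
  have hmR : (0:ℝ) < (m:ℝ) := by exact_mod_cast hm
  have key : ∀ d : ℕ, (1:ℝ)/(Nat.factorial (m+d) : ℝ)
      ≤ (1/(Nat.factorial m : ℝ)) * (1/((m:ℝ)+1))^d := by
    intro d
    have hR : (Nat.factorial m : ℝ) * ((m:ℝ)+1)^d ≤ (Nat.factorial (m+d) : ℝ) := by
      exact_mod_cast Nat.factorial_mul_pow_le_factorial (m := m) (n := d)
    rw [one_div_pow, div_mul_div_comm, one_mul]
    apply one_div_le_one_div_of_le (by positivity) hR
  calc ∑ d ∈ range D, (1:ℝ)/(Nat.factorial (m+d) : ℝ)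
      ≤ ∑ d ∈ range D, (1/(Nat.factorial m : ℝ)) * (1/((m:ℝ)+1))^d :=
        Finset.sum_le_sum (fun d _ => key d)
    _ = (1/(Nat.factorial m : ℝ)) * ∑ d ∈ range D, (1/((m:ℝ)+1))^d := by
        rw [Finset.mul_sum]
    _ ≤ (1/(Nat.factorial m : ℝ)) * (((m:ℝ)+1)/m) := by
        apply mul_le_mul_of_nonneg_left _ (by positivity)
        have hgb := geom_bound (1/((m:ℝ)+1)) (by positivity)
          (by rw [div_lt_one (by linarith)]; linarith) D
        have he : 1 - 1/((m:ℝ)+1) = (m:ℝ)/((m:ℝ)+1) := by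
          field_simp
          ring
        rw [he, one_div_div] at hgb
        exact hgb

lemma peel3 (g : ℕ → ℝ) (K : ℕ) :
    ∑ d ∈ range (K+4), g d = g 0 + g 1 + g 2 + ∑ e ∈ range (K+1), g (e+3) := by
  rw [show K+4 = (K+3)+1 by omega, Finset.sum_range_succ']
  rw [show K+3 = (K+2)+1 by omega, Finset.sum_range_succ']
  rw [show K+2 = (K+1)+1 by omega, Finset.sum_range_succ']
  have h : ∀ i ∈ range (K+1), g (i+1+1+1) = g (i+3) := by
    intro i _
    congr 1
  rw [Finset.sum_congr rfl h]
  norm_num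
  ring

-- split off the top two terms (T 1 term vanishes)
lemma Gsplit (m c' : ℕ) :
    ∑ d ∈ range (c'+4), T (c'+3-d) / (Nat.factorial (m+d) : ℝ)
      = (∑ d ∈ range (c'+2), T (c'+3-d) / (Nat.factorial (m+d) : ℝ))
        + 1/(Nat.factorial (m+(c'+3)) : ℝ) := by
  rw [show c'+4 = (c'+3)+1 by omega, Finset.sum_range_succ]
  rw [show c'+3 = (c'+2)+1 by omega, Finset.sum_range_succ]
  have h1 : c'+3-(c'+2) = 1 := by omega
  have h2 : c'+3-(c'+2+1) = 0 := by omega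
  rw [h1, h2, T1, T0, zero_div]
  rw [show c'+2+1 = c'+3 by omega]
  ring

lemma Gmid (m c' : ℕ) :
    ∑ d ∈ range (c'+2), T (c'+3-d) / (Nat.factorial (m+d) : ℝ)
      ≤ (1/2) * ∑ d ∈ range (c'+2), (1:ℝ)/(Nat.factorial (m+d) : ℝ) := by
  rw [Finset.mul_sum]
  apply Finset.sum_le_sum
  intro d hd
  rw [Finset.mem_range] at hd
  have h2d : 2 ≤ c'+3-d := by omega
  have hT := T_le2 h2d
  rw [mul_one_div]
  gcongr

lemma Gc0 (m : ℕ) :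
    ∑ d ∈ range (0+1), T (0 - d) / (Nat.factorial (m+d) : ℝ)
      ≤ 3 * T 0 / (Nat.factorial m : ℝ) := by
  rw [Finset.sum_range_one]
  norm_num [T0]
  rw [inv_eq_one_div, div_le_div_iff₀ (fact_pos_real m) (fact_pos_real m)]
  nlinarith [fact_pos_real m]

lemma Gc2 (m : ℕ) :
    ∑ d ∈ range (2+1), T (2 - d) / (Nat.factorial (m+d) : ℝ)
      ≤ 3 * T 2 / (Nat.factorial m : ℝ) := by
  rw [Finset.sum_range_succ, Finset.sum_range_succ, Finset.sum_range_one]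
  norm_num [T0, T1, T2]
  have h1 := fact_le_real (show m ≤ m + 2 by omega)
  have h2 := fact_pos_real m
  have h3 := fact_pos_real (m+2)
  rw [inv_eq_one_div]
  have e1 : (1:ℝ)/2/(Nat.factorial m : ℝ) = (1/2) * (1/(Nat.factorial m : ℝ)) := by ring
  have e2 : (3:ℝ)/2/(Nat.factorial m : ℝ) = (3/2) * (1/(Nat.factorial m : ℝ)) := by ring
  rw [e1, e2]
  linarith

lemma Gm2 (m c' : ℕ) (hm : 2 ≤ m) :
    ∑ d ∈ range (c'+4), T (c'+3-d) / (Nat.factorial (m+d) : ℝ)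
      ≤ 3 * T (c'+3) / (Nat.factorial m : ℝ) := by
  rw [Gsplit]
  have hmid := Gmid m c'
  have hSB := SB m (by omega) (c'+2)
  have hmR : (2:ℝ) ≤ (m:ℝ) := by exact_mod_cast hm
  have hA : (0:ℝ) < 1/(Nat.factorial m : ℝ) := by positivity
  have hfrac : ((m:ℝ)+1)/(m:ℝ) ≤ 3/2 := by
    rw [div_le_iff₀ (by linarith : (0:ℝ) < (m:ℝ))]
    linarith
  have hmid2 : ∑ d ∈ range (c'+2), T (c'+3-d)/(Nat.factorial (m+d):ℝ)
      ≤ (3/4) * (1/(Nat.factorial m : ℝ)) := by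
    calc ∑ d ∈ range (c'+2), T (c'+3-d)/(Nat.factorial (m+d):ℝ)
        ≤ (1/2) * ∑ d ∈ range (c'+2), (1:ℝ)/(Nat.factorial (m+d):ℝ) := hmid
      _ ≤ (1/2) * ((1/(Nat.factorial m : ℝ)) * (((m:ℝ)+1)/(m:ℝ))) :=
          mul_le_mul_of_nonneg_left hSB (by norm_num)
      _ ≤ (1/2) * ((1/(Nat.factorial m : ℝ)) * (3/2)) :=
          mul_le_mul_of_nonneg_left
            (mul_le_mul_of_nonneg_left hfrac (le_of_lt hA)) (by norm_num)
      _ = (3/4) * (1/(Nat.factorial m : ℝ)) := by ring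
  have htail : (1:ℝ)/(Nat.factorial (m+(c'+3)):ℝ) ≤ (1/60) * (1/(Nat.factorial m : ℝ)) := by
    have h1 : (1:ℝ)/(Nat.factorial (m+(c'+3)):ℝ) ≤ 1/(Nat.factorial (m+3):ℝ) :=
      fact_le_real (by omega)
    have e : Nat.factorial (m+3) = (m+3)*((m+2)*((m+1)*Nat.factorial m)) := by
      rw [show m+3 = (m+2)+1 from rfl, Nat.factorial_succ,
          show m+2 = (m+1)+1 from rfl, Nat.factorial_succ, Nat.factorial_succ]
    have h2 : (60:ℕ) * Nat.factorial m ≤ Nat.factorial (m+3) := by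
      rw [e]
      have h60 : 60 ≤ (m+3)*((m+2)*(m+1)) := by
        have h5 : 5*(4*3) ≤ (m+3)*((m+2)*(m+1)) :=
          Nat.mul_le_mul (by omega) (Nat.mul_le_mul (by omega) (by omega))
        omega
      calc 60 * Nat.factorial m ≤ ((m+3)*((m+2)*(m+1))) * Nat.factorial m :=
            Nat.mul_le_mul_right _ h60
        _ = (m+3)*((m+2)*((m+1)*Nat.factorial m)) := by ring
    have h2R : (60:ℝ) * (Nat.factorial m : ℝ) ≤ (Nat.factorial (m+3) : ℝ) := by
      exact_mod_cast h2
    have h3 : (1:ℝ)/(Nat.factorial (m+3):ℝ) ≤ 1/((60:ℝ) * (Nat.factorial m:ℝ)) :=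
      one_div_le_one_div_of_le (by positivity) h2R
    calc (1:ℝ)/(Nat.factorial (m+(c'+3)):ℝ) ≤ 1/(Nat.factorial (m+3):ℝ) := h1
      _ ≤ 1/((60:ℝ)*(Nat.factorial m:ℝ)) := h3
      _ = (1/60) * (1/(Nat.factorial m:ℝ)) := (one_div_mul_one_div _ _).symm
  have hT := T_ge2 (show 2 ≤ c'+3 by omega)
  have hR : 1/(Nat.factorial m:ℝ) ≤ 3 * T (c'+3) / (Nat.factorial m : ℝ) := by
    rw [div_le_div_iff₀ (fact_pos_real m) (fact_pos_real m)]
    nlinarith [fact_pos_real m]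
  linarith

lemma SB1 (D : ℕ) : ∑ d ∈ range D, (1:ℝ)/(Nat.factorial (1+d) : ℝ) ≤ 7/4 := by
  match D with
  | 0 => simp; norm_num
  | (D'+1) =>
    rw [Finset.sum_range_succ']
    have h : ∀ i ∈ range D', (1:ℝ)/(Nat.factorial (1+(i+1)):ℝ) = 1/(Nat.factorial (2+i):ℝ) := by
      intro i _
      have : 1+(i+1) = 2+i := by omega
      rw [this]
    rw [Finset.sum_congr rfl h]
    have hSB := SB 2 (by omega) D'
    norm_num [Nat.factorial] at hSB ⊢
    linarith

lemma Gm1 (c' : ℕ) :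
    ∑ d ∈ range (c'+4), T (c'+3-d) / (Nat.factorial (1+d) : ℝ)
      ≤ 3 * T (c'+3) / (Nat.factorial 1 : ℝ) := by
  rw [Gsplit]
  have hmid := Gmid 1 c'
  have hSB1 := SB1 (c'+2)
  have htail : (1:ℝ)/(Nat.factorial (1+(c'+3)):ℝ) ≤ 1/24 := by
    have h := fact_le_real (show 4 ≤ 1+(c'+3) by omega)
    calc (1:ℝ)/(Nat.factorial (1+(c'+3)):ℝ) ≤ 1/(Nat.factorial 4:ℝ) := h
      _ = 1/24 := by norm_num [Nat.factorial]
  have hT := T_ge2 (show 2 ≤ c'+3 by omega)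
  have hR : (1:ℝ) ≤ 3 * T (c'+3) / (Nat.factorial 1 : ℝ) := by
    norm_num [Nat.factorial]
    linarith
  linarith

lemma Gm0 (c' : ℕ) :
    ∑ d ∈ range (c'+4), T (c'+3-d) / (Nat.factorial (0+d) : ℝ)
      ≤ 3 * T (c'+3) / (Nat.factorial 0 : ℝ) := by
  match c' with
  | 0 =>
    norm_num [Finset.sum_range_succ, T0, T1, T2, T3, Nat.factorial]
  | 1 =>
    norm_num [Finset.sum_range_succ, T0, T1, T2, T3, T4, Nat.factorial]
  | (c''+2) =>
    rw [Gsplit]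
    rw [show c''+2+2 = c''+4 by omega]
    rw [peel3 (fun d => T (c''+2+3-d) / (Nat.factorial (0+d):ℝ)) c'']
    have e4 : c''+2+3 = c''+5 := by omega
    simp only [e4]
    have e3 : ∀ e ∈ range (c''+1),
        T (c''+5-(e+3)) / (Nat.factorial (0+(e+3)):ℝ)
          = T (c''+2-e) / (Nat.factorial (3+e):ℝ) := by
      intro e _
      have h1 : c''+5-(e+3) = c''+2-e := by omega
      have h2 : 0+(e+3) = 3+e := by omega
      rw [h1, h2]
    rw [Finset.sum_congr rfl e3]
    have hsum : ∑ e ∈ range (c''+1), T (c''+2-e) / (Nat.factorial (3+e):ℝ) ≤ 1/9 := by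
      have hstep : ∑ e ∈ range (c''+1), T (c''+2-e) / (Nat.factorial (3+e):ℝ)
          ≤ (1/2) * ∑ e ∈ range (c''+1), (1:ℝ)/(Nat.factorial (3+e):ℝ) := by
        rw [Finset.mul_sum]
        apply Finset.sum_le_sum
        intro e he
        rw [Finset.mem_range] at he
        have h2e : 2 ≤ c''+2-e := by omega
        have hT := T_le2 h2e
        rw [mul_one_div]
        gcongr
      have hSB := SB 3 (by omega) (c''+1)
      norm_num [Nat.factorial] at hSB
      simp only [one_div] at hstep
      linarith
    have hT0 := T_le3 (show 3 ≤ c''+5 by omega)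
    have hT1 := T_le3 (show 3 ≤ c''+4 by omega)
    have hT2 := T_le3 (show 3 ≤ c''+3 by omega)
    have hTlow := T_ge4 (show 4 ≤ c''+5 by omega)
    have htail : (1:ℝ)/(Nat.factorial (0+(c''+5)):ℝ) ≤ 1/120 := by
      have h := fact_le_real (show 5 ≤ 0+(c''+5) by omega)
      calc (1:ℝ)/(Nat.factorial (0+(c''+5)):ℝ) ≤ 1/(Nat.factorial 5:ℝ) := h
        _ = 1/120 := by norm_num [Nat.factorial]
    norm_num [Nat.factorial]
    norm_num [Nat.factorial] at htail
    rw [show c''+5-2 = c''+3 by omega]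
    linarith

lemma G (m c : ℕ) (hc : c ≠ 1) :
    ∑ d ∈ range (c+1), T (c - d) / (Nat.factorial (m+d) : ℝ)
      ≤ 3 * T c / (Nat.factorial m : ℝ) := by
  match c, hc with
  | 0, _ => exact Gc0 m
  | 1, h => exact absurd rfl h
  | 2, _ => exact Gc2 m
  | (c'+3), _ =>
    rw [show c'+3+1 = c'+4 by omega]
    match m with
    | 0 => exact Gm0 c'
    | 1 => exact Gm1 c'
    | (m''+2) => exact Gm2 (m''+2) c' (by omega)

theorem fixed_point_prob_bounds (n j : ℕ) (hj : 1 ≤ j) (hjn : j ≤ n) (hne : j ≠ n - 1)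
    (s : ℕ → ℝ)
    (hs : ∀ i, s i = (1 / (Nat.factorial i : ℝ)) * ∑ k ∈ Finset.range (n - i + 1), (-1 : ℝ) ^ k / (Nat.factorial k : ℝ)) :
    (∑ i ∈ Finset.Icc j n, s i ≤ 3 * s j) ∧
    (∑ i ∈ Finset.Icc j n, (i : ℝ) * s i ≤ 3 * (j : ℝ) * s j) := by
  obtain ⟨j', rfl⟩ : ∃ j', j = j' + 1 := ⟨j-1, by omega⟩
  have hsval : ∀ i, s i = T (n - i) / (Nat.factorial i : ℝ) := by
    intro i
    rw [hs i, T, one_div_mul_eq_div]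
  have hsnn : ∀ i, 0 ≤ s i := by
    intro i
    rw [hsval i]
    exact div_nonneg (T_nonneg _) (le_of_lt (fact_pos_real i))
  have key2 : ∑ i ∈ Finset.Icc (j'+1) n, (i:ℝ) * s i ≤ 3 * ((j'+1 : ℕ):ℝ) * s (j'+1) := by
    have hrange : ∑ i ∈ Finset.Icc (j'+1) n, (i:ℝ) * s i
        = ∑ d ∈ range ((n-(j'+1))+1), T ((n-(j'+1)) - d) / (Nat.factorial (j'+d) : ℝ) := by
      rw [← Finset.Ico_add_one_right_eq_Icc, Finset.sum_Ico_eq_sum_range]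
      rw [show n + 1 - (j'+1) = (n-(j'+1)) + 1 by omega]
      apply Finset.sum_congr rfl
      intro d hd
      rw [Finset.mem_range] at hd
      rw [hsval (j'+1+d)]
      rw [show j'+1+d = (j'+d)+1 by omega]
      rw [show n - ((j'+d)+1) = (n - (j'+1)) - d by omega]
      rw [Nat.factorial_succ]
      have hF := fact_pos_real (j'+d)
      push_cast
      field_simp
    rw [hrange, hsval (j'+1)]
    have hG := G j' (n-(j'+1)) (by omega)
    calc ∑ d ∈ range ((n-(j'+1))+1), T ((n-(j'+1)) - d) / (Nat.factorial (j'+d) : ℝ)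
        ≤ 3 * T (n-(j'+1)) / (Nat.factorial j' : ℝ) := hG
      _ = 3 * ((j'+1:ℕ):ℝ) * (T (n - (j'+1)) / (Nat.factorial (j'+1) : ℝ)) := by
          rw [Nat.factorial_succ]
          have := fact_pos_real j'
          push_cast
          field_simp
  refine ⟨?_, key2⟩
  have hjpos : (0:ℝ) < ((j'+1:ℕ):ℝ) := by positivity
  calc ∑ i ∈ Finset.Icc (j'+1) n, s i
      ≤ ∑ i ∈ Finset.Icc (j'+1) n, ((i:ℝ)/((j'+1:ℕ):ℝ)) * s i := by
        apply Finset.sum_le_sum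
        intro i hi
        rw [Finset.mem_Icc] at hi
        have hji : ((j'+1:ℕ):ℝ) ≤ (i:ℝ) := by exact_mod_cast hi.1
        have h1i : (1:ℝ) ≤ (i:ℝ)/((j'+1:ℕ):ℝ) := by
          rw [le_div_iff₀ hjpos]
          linarith
        nlinarith [hsnn i]
    _ = (1/((j'+1:ℕ):ℝ)) * ∑ i ∈ Finset.Icc (j'+1) n, (i:ℝ) * s i := by
        rw [Finset.mul_sum]
        apply Finset.sum_congr rfl
        intro i _
        ring
    _ ≤ (1/((j'+1:ℕ):ℝ)) * (3 * ((j'+1:ℕ):ℝ) * s (j'+1)) := by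
        apply mul_le_mul_of_nonneg_left key2 (by positivity)
    _ = 3 * s (j'+1) := by
        field_simp
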